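/- Let (F_s)_{s≥0} be a filtration on a probability space, let I be a countable index set, and for each i ∈ I let (ζ^i_s)_{s≥0} be an (F_s)-adapted ℤ-valued process with right-continuous sample paths and ζ^i_0 = x_i almost surely, where x_i ≤ 0 are integers with φ := Σ_{i∈I} e^{θ x_i} < ∞. Let θ > 0 and α > 0 satisfy μ := αθ − 2(cosh θ − 1) > 0, and assume that for each i the process exp(θ ζ^i_s − 2(cosh θ − 1)s) is an (F_s)-martingale. Then for every t ≥ 0, P(there exist i ∈ I and s ≥ t with ζ^i_s ≥ α s) ≤ φ e^{−μt}. -/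

import Mathlib

open MeasureTheory Filter
open scoped NNReal ENNReal Topology

private lemma single_bound
    {Ω : Type*} {mΩ : MeasurableSpace Ω} {ℙ : Measure Ω} [IsProbabilityMeasure ℙ]
    (𝓕 : Filtration ℝ≥0 mΩ)
    (θ α : ℝ) (hθ : 0 < θ) (hα : 0 < α)
    (hμ : 0 < α * θ - 2 * (Real.cosh θ - 1))
    (Z : ℝ≥0 → Ω → ℤ)
    (hrc : ∀ ω : Ω, ∀ s : ℝ≥0, ContinuousWithinAt (fun u => Z u ω) (Set.Ici s) s)
    (x : ℤ)
    (h0 : ∀ᵐ ω ∂ℙ, Z 0 ω = x)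
    (hM : Martingale
      (fun (s : ℝ≥0) (ω : Ω) =>
        Real.exp (θ * (Z s ω : ℝ) - 2 * (Real.cosh θ - 1) * (s : ℝ))) 𝓕 ℙ)
    (t : ℝ≥0) :
    ℙ {ω | ∃ s : ℝ≥0, t ≤ s ∧ α * (s : ℝ) ≤ (Z s ω : ℝ)} ≤
      ENNReal.ofReal
        (Real.exp (θ * (x : ℝ)) * Real.exp (-(α * θ - 2 * (Real.cosh θ - 1)) * (t : ℝ))) := by
  classical
  set c : ℝ := 2 * (Real.cosh θ - 1) with hc_def
  have hc : 0 ≤ c := by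
    have := Real.one_le_cosh θ; nlinarith
  set μr : ℝ := α * θ - c with hμr_def
  set M : ℝ≥0 → Ω → ℝ := fun s ω => Real.exp (θ * (Z s ω : ℝ) - c * (s : ℝ)) with hM_def
  have hMmart : Martingale M 𝓕 ℙ := hM
  set A : Set Ω := {ω | ∃ s : ℝ≥0, t ≤ s ∧ α * (s : ℝ) ≤ (Z s ω : ℝ)} with hA_def
  -- constant expectation
  have hEx : ∀ s : ℝ≥0, ∫ ω, M s ω ∂ℙ = Real.exp (θ * (x : ℝ)) := by
    intro s
    have h1 : (ℙ[M s | 𝓕 0]) =ᵐ[ℙ] M 0 := hMmart.condExp_ae_eq (zero_le : (0 : ℝ≥0) ≤ s)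
    have h2 : ∫ ω, M s ω ∂ℙ = ∫ ω, M 0 ω ∂ℙ := by
      rw [← integral_condExp (𝓕.le 0) (f := M s), integral_congr_ae h1]
    have h3 : (fun ω => M 0 ω) =ᵐ[ℙ] fun _ => Real.exp (θ * (x : ℝ)) := by
      filter_upwards [h0] with ω hω
      simp [hM_def, hω]
    rw [h2, integral_congr_ae h3]
    simp
  -- dyadic grid
  set τ : ℕ → ℕ → ℝ≥0 := fun n j => t + (j : ℝ≥0) / 2 ^ n with hτ_def
  have hτcoe : ∀ n j, ((τ n j : ℝ≥0) : ℝ) = (t : ℝ) + (j : ℝ) / 2 ^ n := by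
    intro n j
    simp [hτ_def, NNReal.coe_div]
  have hτmono : ∀ n, Monotone (τ n) := by
    intro n a b hab
    simp only [hτ_def]
    gcongr
  -- discrete filtrations and sampled martingales
  set G : ℕ → Filtration ℕ mΩ := fun n =>
    ⟨fun j => 𝓕 (τ n (min j (n * 2 ^ n))),
      fun a b hab => 𝓕.mono (hτmono n (min_le_min_right _ hab)),
      fun j => 𝓕.le _⟩ with hG_def
  have hdm : ∀ n, Martingale (fun j ω => M (τ n (min j (n * 2 ^ n))) ω) (G n) ℙ := by
    intro n
    refine ⟨fun j => hMmart.stronglyAdapted _, fun a b hab => ?_⟩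
    exact hMmart.condExp_ae_eq (hτmono n (min_le_min_right _ hab))
  have hnonneg : ∀ n, (0 : ℕ → Ω → ℝ) ≤ fun j ω => M (τ n (min j (n * 2 ^ n))) ω :=
    fun n j ω => (Real.exp_pos _).le
  -- thresholds
  set C : ℝ := Real.exp (μr * (t : ℝ)) with hC_def
  have hμrpos : 0 < μr := hμ
  have hC1 : 1 ≤ C := Real.one_le_exp (mul_nonneg hμrpos.le t.coe_nonneg)
  have hCpos : 0 < C := lt_of_lt_of_le one_pos hC1
  set lam : ℕ → ℝ := fun k => C - 1 / ((k : ℝ) + 2) with hlam_def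
  have hlam_half : ∀ k, (1 : ℝ) / 2 ≤ lam k := by
    intro k
    have hk : (0 : ℝ) ≤ (k : ℝ) := Nat.cast_nonneg k
    have h2 : (2 : ℝ) ≤ (k : ℝ) + 2 := by linarith
    have : 1 / ((k : ℝ) + 2) ≤ 1 / 2 := by
      apply one_div_le_one_div_of_le <;> linarith
    simp only [hlam_def]; linarith
  have hlampos : ∀ k, 0 < lam k := fun k => lt_of_lt_of_le (by norm_num) (hlam_half k)
  have hlamltC : ∀ k, lam k < C := by
    intro k
    have : 0 < 1 / ((k : ℝ) + 2) := by positivity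
    simp only [hlam_def]; linarith
  set ε : ℕ → ℝ≥0 := fun k => Real.toNNReal (lam k) with hε_def
  have hεcoe : ∀ k, ((ε k : ℝ≥0) : ℝ) = lam k := fun k => Real.coe_toNNReal _ (hlampos k).le
  -- the key sets
  set S : ℕ → ℕ → Set Ω := fun n k =>
    {ω | ((ε k : ℝ≥0) : ℝ) ≤ (Finset.range (n * 2 ^ n + 1)).sup' Finset.nonempty_range_add_one
      fun j => M (τ n (min j (n * 2 ^ n))) ω} with hS_def
  -- Doob's maximal inequality bound
  have key1 : ∀ n k, (ε k : ℝ≥0∞) * ℙ (S n k) ≤ ENNReal.ofReal (Real.exp (θ * (x : ℝ))) := by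
    intro n k
    have hdoob := maximal_ineq (μ := ℙ) (hdm n).submartingale (hnonneg n) (ε := ε k) (n * 2 ^ n)
    have hsi : ∫ ω in S n k, M (τ n (min (n * 2 ^ n) (n * 2 ^ n))) ω ∂ℙ ≤
        ∫ ω, M (τ n (min (n * 2 ^ n) (n * 2 ^ n))) ω ∂ℙ :=
      setIntegral_le_integral (hMmart.integrable _)
        (Eventually.of_forall fun ω => (Real.exp_pos _).le)
    calc (ε k : ℝ≥0∞) * ℙ (S n k) = ε k • ℙ (S n k) := rfl
      _ ≤ ENNReal.ofReal (∫ ω in S n k, M (τ n (min (n * 2 ^ n) (n * 2 ^ n))) ω ∂ℙ) := hdoob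
      _ ≤ ENNReal.ofReal (∫ ω, M (τ n (min (n * 2 ^ n) (n * 2 ^ n))) ω ∂ℙ) :=
          ENNReal.ofReal_le_ofReal hsi
      _ = ENNReal.ofReal (Real.exp (θ * (x : ℝ))) := by rw [hEx]
  -- monotonicity of `S` in `n`
  have hSmono : ∀ k, Monotone fun n => S n k := by
    intro k
    apply monotone_nat_of_le_succ
    intro n ω hω
    simp only [hS_def, Set.mem_setOf_eq, Finset.le_sup'_iff, Finset.mem_range,
      Nat.lt_succ_iff] at hω ⊢
    obtain ⟨j, hj, hle⟩ := hω
    have h2j : 2 * j ≤ (n + 1) * 2 ^ (n + 1) := by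
      calc 2 * j ≤ 2 * (n * 2 ^ n) := by omega
        _ ≤ (n + 1) * 2 ^ (n + 1) := by ring_nf; nlinarith [Nat.one_le_two_pow (n := n)]
    refine ⟨2 * j, h2j, ?_⟩
    have hτeq : τ (n + 1) (min (2 * j) ((n + 1) * 2 ^ (n + 1))) = τ n (min j (n * 2 ^ n)) := by
      rw [min_eq_left h2j, min_eq_left hj]
      apply NNReal.coe_injective
      rw [hτcoe, hτcoe]
      push_cast
      have hp : (2 : ℝ) ^ n ≠ 0 := by positivity
      field_simp
      ring
    rw [hτeq]
    exact hle
  -- the inclusion of the event into the union of the `S n k`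
  have hincl : ∀ k, A ⊆ ⋃ n, S n k := by
    intro k ω hω
    obtain ⟨s, hts, hαs⟩ := hω
    set g : ℝ≥0 → ℝ := fun u => M u ω with hg_def
    have hgs : C ≤ g s := by
      have h1 : μr * (t : ℝ) ≤ μr * (s : ℝ) :=
        mul_le_mul_of_nonneg_left (NNReal.coe_le_coe.2 hts) hμrpos.le
      have h2 : α * θ * (s : ℝ) ≤ θ * (Z s ω : ℝ) := by
        have := mul_le_mul_of_nonneg_left hαs hθ.le
        nlinarith
      have h3 : μr * (s : ℝ) ≤ θ * (Z s ω : ℝ) - c * (s : ℝ) := by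
        have hs0 : (0 : ℝ) ≤ (s : ℝ) := s.coe_nonneg
        simp only [hμr_def]; nlinarith
      calc C = Real.exp (μr * (t : ℝ)) := rfl
        _ ≤ Real.exp (θ * (Z s ω : ℝ) - c * (s : ℝ)) := Real.exp_le_exp.2 (le_trans h1 h3)
        _ = g s := rfl
    have h1 : ContinuousWithinAt (fun u : ℝ≥0 => ((Z u ω : ℤ) : ℝ)) (Set.Ici s) s :=
      (continuous_of_discreteTopology (f := fun z : ℤ => (z : ℝ))).continuousAt.comp_continuousWithinAt
        (hrc ω s)
    have h2 : ContinuousWithinAt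
        (fun u : ℝ≥0 => θ * ((Z u ω : ℤ) : ℝ) - c * (u : ℝ)) (Set.Ici s) s :=
      (continuousWithinAt_const.mul h1).sub
        ((continuous_const.mul NNReal.continuous_coe).continuousWithinAt)
    have hgcont : ContinuousWithinAt g (Set.Ici s) s :=
      Real.continuous_exp.continuousAt.comp_continuousWithinAt h2
    have hlt : ((ε k : ℝ≥0) : ℝ) < g s := by
      rw [hεcoe]; exact lt_of_lt_of_le (hlamltC k) hgs
    have hev : g ⁻¹' Set.Ioi ((ε k : ℝ≥0) : ℝ) ∈ 𝓝[Set.Ici s] s := hgcont (Ioi_mem_nhds hlt)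
    rw [Metric.mem_nhdsWithin_iff] at hev
    obtain ⟨δ, hδ, hball⟩ := hev
    obtain ⟨n₁, hn₁⟩ := exists_pow_lt_of_lt_one hδ (by norm_num : (1 : ℝ) / 2 < 1)
    set n₂ : ℕ := ⌈(s : ℝ) - (t : ℝ) + 1⌉₊ with hn₂_def
    set n : ℕ := max n₁ n₂ with hn_def
    have hpow0 : (0 : ℝ) < 2 ^ n := by positivity
    have hpow0' : (0 : ℝ) < 2 ^ n₁ := by positivity
    have hmesh : (1 : ℝ) / 2 ^ n < δ := by
      have h1 : (2 : ℝ) ^ n₁ ≤ 2 ^ n := by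
        apply pow_le_pow_right₀ (by norm_num) (le_max_left _ _)
      have h2 : (1 : ℝ) / 2 ^ n ≤ 1 / 2 ^ n₁ := one_div_le_one_div_of_le hpow0' h1
      have h3 : ((1 : ℝ) / 2) ^ n₁ = 1 / 2 ^ n₁ := by rw [div_pow, one_pow]
      linarith [h3 ▸ hn₁]
    have hrange : (s : ℝ) + 1 ≤ (t : ℝ) + n := by
      have ha : (s : ℝ) - (t : ℝ) + 1 ≤ n₂ := Nat.le_ceil _
      have hb : (n₂ : ℝ) ≤ n := by exact_mod_cast Nat.cast_le.2 (le_max_right n₁ n₂)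
      linarith
    set d : ℝ := (s : ℝ) - (t : ℝ) with hd_def
    have hd0 : 0 ≤ d := by
      simp only [hd_def, sub_nonneg]
      exact NNReal.coe_le_coe.2 hts
    set j : ℕ := ⌈d * 2 ^ n⌉₊ with hj_def
    have hj₁ : d * 2 ^ n ≤ j := Nat.le_ceil _
    have hj₂ : (j : ℝ) < d * 2 ^ n + 1 := Nat.ceil_lt_add_one (by positivity)
    have hpow1 : (1 : ℝ) ≤ 2 ^ n := by exact_mod_cast Nat.one_le_two_pow (n := n)
    have hsu : s ≤ τ n j := by
      rw [← NNReal.coe_le_coe, hτcoe]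
      have : d ≤ (j : ℝ) / 2 ^ n := by
        rw [le_div_iff₀ hpow0]; exact hj₁
      simp only [hd_def] at this
      linarith
    have hjd : (j : ℝ) / 2 ^ n < d + 1 / 2 ^ n := by
      rw [div_lt_iff₀ hpow0]
      have : (d + 1 / 2 ^ n) * 2 ^ n = d * 2 ^ n + 1 := by field_simp
      linarith [this ▸ hj₂]
    have hdist : dist (τ n j) s < δ := by
      rw [NNReal.dist_eq, hτcoe]
      have hnn : (0 : ℝ) ≤ (t : ℝ) + (j : ℝ) / 2 ^ n - (s : ℝ) := by
        have := (NNReal.coe_le_coe.2 hsu)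
        rw [hτcoe] at this
        linarith
      rw [abs_of_nonneg hnn]
      have : (t : ℝ) + (j : ℝ) / 2 ^ n - (s : ℝ) = (j : ℝ) / 2 ^ n - d := by
        simp only [hd_def]; ring
      rw [this]
      linarith
    have hjN : j ≤ n * 2 ^ n := by
      have hdn : d ≤ (n : ℝ) - 1 := by simp only [hd_def]; linarith
      have h3 : (j : ℝ) ≤ (n : ℝ) * 2 ^ n := by nlinarith
      have h4 : (j : ℝ) ≤ ((n * 2 ^ n : ℕ) : ℝ) := by push_cast; exact h3
      exact_mod_cast h4
    have hgt : ((ε k : ℝ≥0) : ℝ) < g (τ n j) :=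
      hball ⟨Metric.mem_ball.2 hdist, hsu⟩
    refine Set.mem_iUnion.2 ⟨n, ?_⟩
    simp only [hS_def, Set.mem_setOf_eq, Finset.le_sup'_iff, Finset.mem_range, Nat.lt_succ_iff]
    exact ⟨j, hjN, by rw [min_eq_left hjN]; exact hgt.le⟩
  -- combine
  have key2 : ∀ k, (ε k : ℝ≥0∞) * ℙ A ≤ ENNReal.ofReal (Real.exp (θ * (x : ℝ))) := by
    intro k
    calc (ε k : ℝ≥0∞) * ℙ A ≤ (ε k : ℝ≥0∞) * ℙ (⋃ n, S n k) :=
          mul_le_mul_right (measure_mono (hincl k)) _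
      _ = ⨆ n, (ε k : ℝ≥0∞) * ℙ (S n k) := by
          rw [Directed.measure_iUnion ((hSmono k).directed_le), ENNReal.mul_iSup]
      _ ≤ ENNReal.ofReal (Real.exp (θ * (x : ℝ))) := iSup_le fun n => key1 n k
  have hofReal : ∀ k, (ε k : ℝ≥0∞) = ENNReal.ofReal (lam k) := fun k => rfl
  have hεlim : Tendsto (fun k : ℕ => ENNReal.ofReal (lam k)) atTop (𝓝 (ENNReal.ofReal C)) := by
    apply ENNReal.tendsto_ofReal
    have h1 : Tendsto (fun k : ℕ => ((k : ℝ) + 2)) atTop atTop :=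
      tendsto_atTop_add_const_right _ 2 tendsto_natCast_atTop_atTop
    have h2 : Tendsto (fun k : ℕ => 1 / ((k : ℝ) + 2)) atTop (𝓝 0) := by
      simpa [one_div, Pi.inv_def] using h1.inv_tendsto_atTop
    have h3 := tendsto_const_nhds (x := C) (f := atTop (α := ℕ)) |>.sub h2
    simpa [hlam_def] using h3
  have hmul : Tendsto (fun k : ℕ => ENNReal.ofReal (lam k) * ℙ A) atTop
      (𝓝 (ENNReal.ofReal C * ℙ A)) :=
    ENNReal.Tendsto.mul_const hεlim (Or.inr (measure_ne_top _ _))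
  have hfin : ENNReal.ofReal C * ℙ A ≤ ENNReal.ofReal (Real.exp (θ * (x : ℝ))) :=
    le_of_tendsto hmul (Eventually.of_forall fun k => by rw [← hofReal k]; exact key2 k)
  have hdiv : ℙ A ≤ ENNReal.ofReal (Real.exp (θ * (x : ℝ))) / ENNReal.ofReal C := by
    rw [ENNReal.le_div_iff_mul_le (Or.inl (ENNReal.ofReal_pos.2 hCpos).ne')
      (Or.inl ENNReal.ofReal_ne_top)]
    rwa [mul_comm]
  calc ℙ A ≤ ENNReal.ofReal (Real.exp (θ * (x : ℝ))) / ENNReal.ofReal C := hdiv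
    _ = ENNReal.ofReal (Real.exp (θ * (x : ℝ)) / C) := (ENNReal.ofReal_div_of_pos hCpos).symm
    _ = ENNReal.ofReal (Real.exp (θ * (x : ℝ)) * Real.exp (-(α * θ - 2 * (Real.cosh θ - 1)) * (t : ℝ))) := by
        congr 1
        rw [hC_def, div_eq_mul_inv, ← Real.exp_neg]
        congr 1
        simp only [hμr_def, hc_def]
        ring

theorem stmt_1
    {Ω : Type*} {mΩ : MeasurableSpace Ω} {ℙ : Measure Ω} [IsProbabilityMeasure ℙ]
    (𝓕 : Filtration ℝ≥0 mΩ)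
    {I : Type*} [Countable I]
    (θ α : ℝ) (hθ : 0 < θ) (hα : 0 < α)
    (hμ : 0 < α * θ - 2 * (Real.cosh θ - 1))
    (ζ : I → ℝ≥0 → Ω → ℤ)
    (hadapt : ∀ i : I, Adapted 𝓕 (ζ i))
    (hrc : ∀ i : I, ∀ ω : Ω, ∀ s : ℝ≥0,
      ContinuousWithinAt (fun u => ζ i u ω) (Set.Ici s) s)
    (x : I → ℤ) (hx : ∀ i, x i ≤ 0)
    (h0 : ∀ i : I, ∀ᵐ ω ∂ℙ, ζ i 0 ω = x i)
    (hφ : Summable (fun i => Real.exp (θ * (x i : ℝ))))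
    (hM : ∀ i : I, Martingale
      (fun (s : ℝ≥0) (ω : Ω) =>
        Real.exp (θ * (ζ i s ω : ℝ) - 2 * (Real.cosh θ - 1) * (s : ℝ))) 𝓕 ℙ)
    (t : ℝ≥0) :
    ℙ {ω | ∃ i : I, ∃ s : ℝ≥0, t ≤ s ∧ α * (s : ℝ) ≤ (ζ i s ω : ℝ)} ≤
      ENNReal.ofReal
        ((∑' i : I, Real.exp (θ * (x i : ℝ))) *
          Real.exp (-(α * θ - 2 * (Real.cosh θ - 1)) * (t : ℝ))) := by
  have hset : {ω | ∃ i : I, ∃ s : ℝ≥0, t ≤ s ∧ α * (s : ℝ) ≤ (ζ i s ω : ℝ)} =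
      ⋃ i : I, {ω | ∃ s : ℝ≥0, t ≤ s ∧ α * (s : ℝ) ≤ (ζ i s ω : ℝ)} := by
    ext ω; simp [Set.mem_iUnion]
  rw [hset]
  calc ℙ (⋃ i : I, {ω | ∃ s : ℝ≥0, t ≤ s ∧ α * (s : ℝ) ≤ (ζ i s ω : ℝ)})
      ≤ ∑' i : I, ℙ {ω | ∃ s : ℝ≥0, t ≤ s ∧ α * (s : ℝ) ≤ (ζ i s ω : ℝ)} :=
        measure_iUnion_le _
    _ ≤ ∑' i : I, ENNReal.ofReal (Real.exp (θ * (x i : ℝ)) *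
          Real.exp (-(α * θ - 2 * (Real.cosh θ - 1)) * (t : ℝ))) :=
        ENNReal.tsum_le_tsum fun i =>
          single_bound 𝓕 θ α hθ hα hμ (ζ i) (hrc i) (x i) (h0 i) (hM i) t
    _ = ENNReal.ofReal (∑' i : I, Real.exp (θ * (x i : ℝ)) *
          Real.exp (-(α * θ - 2 * (Real.cosh θ - 1)) * (t : ℝ))) :=
        (ENNReal.ofReal_tsum_of_nonneg (fun i => by positivity) (hφ.mul_right _)).symm
    _ = ENNReal.ofReal ((∑' i : I, Real.exp (θ * (x i : ℝ))) *
          Real.exp (-(α * θ - 2 * (Real.cosh θ - 1)) * (t : ℝ))) := by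
        rw [tsum_mul_right]
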